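/- On a probability space, in the multilayer e-filter setting with null structure, fix original levels α₀^(1),…,α₀^(M) ∈ (0,1) and target levels α^(1),…,α^(M) ∈ (0,1). For each m ∈ [M], let R^(m) ⊆ [G^(m)] be a random rejection set and V̂^(m) a nonnegative random variable satisfying E[|R^(m) ∩ H0^(m)| / max(V̂^(m), α₀^(m))] ≤ 1. Define the generalized e-values e_g^(m) = G^(m)·1{g ∈ R^(m)}/max(V̂^(m), α₀^(m)), and let S be the output of the generalized e-filter applied to these e-values at levels α^(1),…,α^(M). Then FDR^(m) ≤ α^(m) for every m ∈ [M]. -/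

import Mathlib

open scoped ENNReal
open Filter MeasureTheory

namespace MultilayerEFilter

variable {N M : ℕ} {G : Fin M → ℕ}

/-- Candidate selection set `S(t) = {j : e_{h(m,j)}^(m) ≥ t^(m) for all m}`. -/
noncomputable def sel (h : (m : Fin M) → Fin N → Fin (G m))
    (e : (m : Fin M) → Fin (G m) → ℝ≥0∞) (t : Fin M → ℝ≥0∞) : Finset (Fin N) :=
  Finset.univ.filter fun j => ∀ m, t m ≤ e m (h m j)

/-- Induced group selection `S^(m) = {g : A_g^(m) ∩ S ≠ ∅}`. -/
noncomputable def selGrp (A : (m : Fin M) → Fin (G m) → Finset (Fin N))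
    (S : Finset (Fin N)) (m : Fin M) : Finset (Fin (G m)) :=
  Finset.univ.filter fun g => ∃ j ∈ A m g, j ∈ S

/-- Estimated FDP at layer `m`: `(G^(m)/t^(m)) / (|S^(m)(t)| ∨ 1)` (with `G/∞ = 0`). -/
noncomputable def FDPhat (A : (m : Fin M) → Fin (G m) → Finset (Fin N))
    (h : (m : Fin M) → Fin N → Fin (G m))
    (e : (m : Fin M) → Fin (G m) → ℝ≥0∞) (t : Fin M → ℝ≥0∞) (m : Fin M) : ℝ≥0∞ :=
  ((G m : ℝ≥0∞) / t m) / ((max (selGrp A (sel h e t) m).card 1 : ℕ) : ℝ≥0∞)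

/-- Admissible threshold vectors. -/
noncomputable def admissible (A : (m : Fin M) → Fin (G m) → Finset (Fin N))
    (h : (m : Fin M) → Fin N → Fin (G m))
    (e : (m : Fin M) → Fin (G m) → ℝ≥0∞) (α : Fin M → ℝ) : Set (Fin M → ℝ≥0∞) :=
  {t | (∀ m, 1 ≤ t m) ∧ ∀ m, FDPhat A h e t m ≤ ENNReal.ofReal (α m)}

/-- Threshold of the generalized e-filter: coordinatewise minimum over admissible vectors. -/
noncomputable def filterThreshold (A : (m : Fin M) → Fin (G m) → Finset (Fin N))
    (h : (m : Fin M) → Fin N → Fin (G m))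
    (e : (m : Fin M) → Fin (G m) → ℝ≥0∞) (α : Fin M → ℝ) (m : Fin M) : ℝ≥0∞ :=
  sInf {s | ∃ t ∈ admissible A h e α, t m = s}

/-- Output of the generalized e-filter. -/
noncomputable def output (A : (m : Fin M) → Fin (G m) → Finset (Fin N))
    (h : (m : Fin M) → Fin N → Fin (G m))
    (e : (m : Fin M) → Fin (G m) → ℝ≥0∞) (α : Fin M → ℝ) : Finset (Fin N) :=
  sel h e (filterThreshold A h e α)

/-- Null groups at layer `m`: groups entirely contained in the null feature set. -/
def nullGrp (A : (m : Fin M) → Fin (G m) → Finset (Fin N))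
    (H0 : Finset (Fin N)) (m : Fin M) : Finset (Fin (G m)) :=
  Finset.univ.filter fun g => A m g ⊆ H0

/-- Layer-`m` false discovery proportion of a selected feature set. -/
noncomputable def FDP (A : (m : Fin M) → Fin (G m) → Finset (Fin N))
    (H0 : Finset (Fin N)) (S : Finset (Fin N)) (m : Fin M) : ℝ≥0∞ :=
  ((selGrp A S m ∩ nullGrp A H0 m).card : ℝ≥0∞) /
    ((max (selGrp A S m).card 1 : ℕ) : ℝ≥0∞)

end MultilayerEFilter

namespace MultilayerEFilter

/-!
STATEMENT 9 (Theorem 2.8, finite-sample case: FEFP).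

For each layer `m`, a random rejection set `R^(m) ⊆ [G^(m)]` and a nonnegative
random estimate `V̂^(m)` satisfy `E[|R^(m) ∩ H0^(m)| / max(V̂^(m), α₀^(m))] ≤ 1`.
Then the generalized e-filter applied to the one-bit generalized e-values
`e_g^(m) = G^(m)·1{g ∈ R^(m)}/max(V̂^(m), α₀^(m))` at target levels
`α^(1),…,α^(M)` satisfies `FDR^(m) ≤ α^(m)` for every `m`.
-/

variable {N M : ℕ} {G : Fin M → ℕ}

-- AUX

lemma sel_anti (h : (m : Fin M) → Fin N → Fin (G m))
    (e : (m : Fin M) → Fin (G m) → ℝ≥0∞) {t t' : Fin M → ℝ≥0∞}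
    (htt : ∀ m, t m ≤ t' m) : sel h e t' ⊆ sel h e t := by
  intro j hj
  simp only [sel, Finset.mem_filter, Finset.mem_univ, true_and] at hj ⊢
  exact fun m => le_trans (htt m) (hj m)

lemma selGrp_mono (A : (m : Fin M) → Fin (G m) → Finset (Fin N))
    {S S' : Finset (Fin N)} (hSS : S ⊆ S') (m : Fin M) :
    selGrp A S m ⊆ selGrp A S' m := by
  intro g hg
  simp only [selGrp, Finset.mem_filter, Finset.mem_univ, true_and] at hg ⊢
  obtain ⟨j, hj1, hj2⟩ := hg
  exact ⟨j, hj1, hSS hj2⟩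

lemma denom_mono (A : (m : Fin M) → Fin (G m) → Finset (Fin N))
    (h : (m : Fin M) → Fin N → Fin (G m))
    (e : (m : Fin M) → Fin (G m) → ℝ≥0∞) {t t' : Fin M → ℝ≥0∞}
    (htt : ∀ m, t m ≤ t' m) (m : Fin M) :
    ((max (selGrp A (sel h e t') m).card 1 : ℕ) : ℝ≥0∞)
      ≤ ((max (selGrp A (sel h e t) m).card 1 : ℕ) : ℝ≥0∞) := by
  exact_mod_cast max_le_max
    (Finset.card_le_card (selGrp_mono A (sel_anti h e htt) m)) (le_refl 1)

lemma one_le_filterThreshold (A : (m : Fin M) → Fin (G m) → Finset (Fin N))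
    (h : (m : Fin M) → Fin N → Fin (G m))
    (e : (m : Fin M) → Fin (G m) → ℝ≥0∞) (α : Fin M → ℝ) (m : Fin M) :
    1 ≤ filterThreshold A h e α m := by
  refine le_sInf ?_
  rintro s ⟨t, ht, rfl⟩
  exact ht.1 m

lemma FDPhat_filterThreshold_le (A : (m : Fin M) → Fin (G m) → Finset (Fin N))
    (h : (m : Fin M) → Fin N → Fin (G m))
    (e : (m : Fin M) → Fin (G m) → ℝ≥0∞) {α : Fin M → ℝ} (hα : ∀ m, 0 < α m) (m : Fin M) :
    FDPhat A h e (filterThreshold A h e α) m ≤ ENNReal.ofReal (α m) := by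
  rw [FDPhat]
  set tt := filterThreshold A h e α with httdef
  set D : ℝ≥0∞ := ((max (selGrp A (sel h e tt) m).card 1 : ℕ) : ℝ≥0∞) with hDdef
  have hD1 : (1 : ℝ≥0∞) ≤ D := by
    rw [hDdef]; exact_mod_cast le_max_right _ 1
  have hD0 : D ≠ 0 := by intro h0; rw [h0] at hD1; exact absurd hD1 (by simp)
  have hDt : D ≠ ∞ := ENNReal.natCast_ne_top _
  set c' : ℝ≥0∞ := ENNReal.ofReal (α m) * D with hc'def
  have hα0 : ENNReal.ofReal (α m) ≠ 0 := by
    simp [ENNReal.ofReal_eq_zero]; linarith [hα m]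
  have hc'0 : c' ≠ 0 := mul_ne_zero hα0 hD0
  have hc't : c' ≠ ∞ := ENNReal.mul_ne_top ENNReal.ofReal_ne_top hDt
  have hle : ∀ t ∈ admissible A h e α, (G m : ℝ≥0∞) / c' ≤ t m := by
    intro t ht
    have hthat_le : ∀ m', tt m' ≤ t m' := fun m' => sInf_le ⟨t, ht, rfl⟩
    have hDle : ((max (selGrp A (sel h e t) m).card 1 : ℕ) : ℝ≥0∞) ≤ D :=
      denom_mono A h e hthat_le m
    have hDet1 : (1 : ℝ≥0∞) ≤ ((max (selGrp A (sel h e t) m).card 1 : ℕ) : ℝ≥0∞) := by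
      exact_mod_cast le_max_right _ 1
    have hDet0 : ((max (selGrp A (sel h e t) m).card 1 : ℕ) : ℝ≥0∞) ≠ 0 := by
      intro h0; rw [h0] at hDet1; exact absurd hDet1 (by simp)
    have h2 := ht.2 m
    rw [FDPhat] at h2
    have h2' := (ENNReal.div_le_iff_le_mul (Or.inl hDet0)
      (Or.inl (ENNReal.natCast_ne_top _))).mp h2
    have h1 : (G m : ℝ≥0∞) / t m ≤ c' :=
      le_trans h2' (by rw [hc'def]; exact mul_le_mul_right hDle _)
    have ht0 : t m ≠ 0 := by
      intro h0; have := ht.1 m; rw [h0] at this; exact absurd this (by simp)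
    have h4 := (ENNReal.div_le_iff_le_mul (Or.inl ht0) (Or.inr hc'0)).mp h1
    exact (ENNReal.div_le_iff_le_mul (Or.inl hc'0) (Or.inl hc't)).mpr
      (by rwa [mul_comm] at h4)
  have hsinf : (G m : ℝ≥0∞) / c' ≤ tt m := by
    refine le_sInf ?_
    rintro s ⟨t, ht, rfl⟩
    exact hle t ht
  have h3 : (G m : ℝ≥0∞) / tt m ≤ c' := by
    calc (G m : ℝ≥0∞) / tt m ≤ (G m : ℝ≥0∞) / ((G m : ℝ≥0∞) / c') :=
          ENNReal.div_le_div_left hsinf _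
      _ ≤ c' := (ENNReal.div_le_iff_le_mul (Or.inr hc't) (Or.inr hc'0)).mpr
          (le_of_eq (ENNReal.mul_div_cancel hc'0 hc't).symm)
  calc ((G m : ℝ≥0∞) / tt m) / D ≤ c' / D := ENNReal.div_le_div_right h3 _
    _ = ENNReal.ofReal (α m) * (D / D) := by rw [hc'def, mul_div_assoc]
    _ = ENNReal.ofReal (α m) := by rw [ENNReal.div_self hD0 hDt, mul_one]


lemma pointwise (A : (m : Fin M) → Fin (G m) → Finset (Fin N))
    (h : (m : Fin M) → Fin N → Fin (G m))
    (hdisj : ∀ m, ∀ g₁ g₂ : Fin (G m), g₁ ≠ g₂ → Disjoint (A m g₁) (A m g₂))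
    (hmem : ∀ m j, j ∈ A m (h m j))
    (H0 : Finset (Fin N)) {α : Fin M → ℝ} (hα : ∀ m, 0 < α m)
    (R : (m : Fin M) → Finset (Fin (G m))) {d : Fin M → ℝ} (hd : ∀ m, 0 < d m) (m : Fin M) :
    FDP A H0 (output A h
        (fun m' g => ENNReal.ofReal ((G m' : ℝ) * (if g ∈ R m' then 1 else 0) / d m')) α) m
      ≤ ENNReal.ofReal (α m) * ENNReal.ofReal (((R m ∩ nullGrp A H0 m).card : ℝ) / d m) := by
  set e : (m' : Fin M) → Fin (G m') → ℝ≥0∞ :=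
    fun m' g => ENNReal.ofReal ((G m' : ℝ) * (if g ∈ R m' then 1 else 0) / d m') with hedef
  set tt := filterThreshold A h e α with httdef
  have hout : output A h e α = sel h e tt := rfl
  rw [hout, FDP]
  set S := sel h e tt with hSdef
  set Dc : ℝ≥0∞ := ((max (selGrp A S m).card 1 : ℕ) : ℝ≥0∞) with hDdef
  set K := (selGrp A S m ∩ nullGrp A H0 m).card with hKdef
  set K' := (R m ∩ nullGrp A H0 m).card with hK'def
  have ht1 : (1 : ℝ≥0∞) ≤ tt m := one_le_filterThreshold A h e α m
  have hsel : ∀ g ∈ selGrp A S m ∩ nullGrp A H0 m,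
      g ∈ R m ∧ tt m ≤ ENNReal.ofReal ((G m : ℝ) / d m) := by
    intro g hg
    rw [Finset.mem_inter] at hg
    obtain ⟨hg1, _⟩ := hg
    simp only [selGrp, Finset.mem_filter, Finset.mem_univ, true_and] at hg1
    obtain ⟨j, hj1, hj2⟩ := hg1
    have hhj : h m j = g := by
      by_contra hne'
      exact Finset.disjoint_left.mp (hdisj m _ _ hne') (hmem m j) hj1
    simp only [hSdef, sel, Finset.mem_filter, Finset.mem_univ, true_and] at hj2
    have hte : tt m ≤ e m g := hhj ▸ hj2 m
    have hgR : g ∈ R m := by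
      by_contra hgR
      rw [hedef] at hte
      simp only [hgR, if_false, mul_zero, zero_div, ENNReal.ofReal_zero] at hte
      exact absurd (le_trans ht1 hte) (by simp)
    refine ⟨hgR, ?_⟩
    rw [hedef] at hte
    simpa [hgR] using hte
  by_cases hK0 : K = 0
  · simp [hK0]
  · obtain ⟨g₀, hg₀⟩ := Finset.card_ne_zero.mp hK0
    have hsub : selGrp A S m ∩ nullGrp A H0 m ⊆ R m ∩ nullGrp A H0 m := by
      intro g hg
      exact Finset.mem_inter.mpr ⟨(hsel g hg).1, (Finset.mem_inter.mp hg).2⟩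
    have hKK' : (K : ℝ≥0∞) ≤ (K' : ℝ≥0∞) := by exact_mod_cast Finset.card_le_card hsub
    set E : ℝ≥0∞ := ENNReal.ofReal ((G m : ℝ) / d m) with hEdef
    have hE : tt m ≤ E := (hsel g₀ hg₀).2
    have ht0 : tt m ≠ 0 := by
      intro h0; rw [h0] at ht1; exact absurd ht1 (by simp)
    set q : ℝ≥0∞ := E / tt m with hqdef
    have hq1 : (1 : ℝ≥0∞) ≤ q := by
      rw [hqdef]
      exact (ENNReal.le_div_iff_mul_le (Or.inl ht0) (Or.inr ENNReal.ofReal_ne_top)).mpr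
        (by rwa [one_mul])
    have hEeq : E = (G m : ℝ≥0∞) / ENNReal.ofReal (d m) := by
      rw [hEdef, ENNReal.ofReal_div_of_pos (hd m), ENNReal.ofReal_natCast]
    have hK'eq : ENNReal.ofReal ((K' : ℝ) / d m) = (K' : ℝ≥0∞) / ENNReal.ofReal (d m) := by
      rw [ENNReal.ofReal_div_of_pos (hd m), ENNReal.ofReal_natCast]
    have hfdp : ((G m : ℝ≥0∞) / tt m) / Dc ≤ ENNReal.ofReal (α m) :=
      FDPhat_filterThreshold_le A h e hα m
    calc (K : ℝ≥0∞) / Dc ≤ ((K' : ℝ≥0∞) * q) / Dc := by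
          refine ENNReal.div_le_div_right ?_ _
          calc (K : ℝ≥0∞) ≤ (K : ℝ≥0∞) * q := le_mul_of_one_le_right zero_le' hq1
            _ ≤ (K' : ℝ≥0∞) * q := mul_le_mul_left hKK' _
      _ = ((K' : ℝ≥0∞) / ENNReal.ofReal (d m)) * (((G m : ℝ≥0∞) / tt m) / Dc) := by
          rw [hqdef, hEeq]
          simp only [div_eq_mul_inv]
          ring
      _ ≤ ((K' : ℝ≥0∞) / ENNReal.ofReal (d m)) * ENNReal.ofReal (α m) :=
          mul_le_mul_right hfdp _
      _ = ENNReal.ofReal (α m) * ENNReal.ofReal ((K' : ℝ) / d m) := by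
          rw [hK'eq, mul_comm]


theorem stmt9 {N M : ℕ} (hN : 1 ≤ N) (hM : 1 ≤ M) {G : Fin M → ℕ}
    (A : (m : Fin M) → Fin (G m) → Finset (Fin N))
    (h : (m : Fin M) → Fin N → Fin (G m))
    (hne : ∀ m g, (A m g).Nonempty)
    (hdisj : ∀ m, ∀ g₁ g₂ : Fin (G m), g₁ ≠ g₂ → Disjoint (A m g₁) (A m g₂))
    (hmem : ∀ m j, j ∈ A m (h m j))
    (H0 : Finset (Fin N))
    {Ω : Type*} [MeasurableSpace Ω] (P : Measure Ω) [IsProbabilityMeasure P]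
    (α₀ α : Fin M → ℝ)
    (hα₀ : ∀ m, α₀ m ∈ Set.Ioo (0 : ℝ) 1) (hα : ∀ m, α m ∈ Set.Ioo (0 : ℝ) 1)
    (Rej : Ω → (m : Fin M) → Finset (Fin (G m)))
    (V : Ω → Fin M → ℝ) (hV : ∀ ω m, 0 ≤ V ω m)
    (hmeasR : ∀ m (g : Fin (G m)), MeasurableSet {ω | g ∈ Rej ω m})
    (hmeasV : ∀ m, Measurable fun ω => V ω m)
    (hE : ∀ m, ∫⁻ ω, ENNReal.ofReal
        (((Rej ω m ∩ nullGrp A H0 m).card : ℝ) / max (V ω m) (α₀ m)) ∂P ≤ 1) :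
    ∀ m, (∫⁻ ω, FDP A H0
        (output A h (fun m' g => ENNReal.ofReal
          ((G m' : ℝ) * (if g ∈ Rej ω m' then 1 else 0) / max (V ω m') (α₀ m'))) α)
        m ∂P) ≤ ENNReal.ofReal (α m) := by
  intro m
  calc (∫⁻ ω, FDP A H0
        (output A h (fun m' g => ENNReal.ofReal
          ((G m' : ℝ) * (if g ∈ Rej ω m' then 1 else 0) / max (V ω m') (α₀ m'))) α)
        m ∂P)
      ≤ ∫⁻ ω, ENNReal.ofReal (α m) *
          ENNReal.ofReal (((Rej ω m ∩ nullGrp A H0 m).card : ℝ) / max (V ω m) (α₀ m)) ∂P := by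
        refine lintegral_mono fun ω => ?_
        exact pointwise A h hdisj hmem H0 (fun m' => (hα m').1) (Rej ω)
          (d := fun m' => max (V ω m') (α₀ m'))
          (fun m' => lt_max_of_lt_right (hα₀ m').1) m
    _ = ENNReal.ofReal (α m) *
          ∫⁻ ω, ENNReal.ofReal (((Rej ω m ∩ nullGrp A H0 m).card : ℝ) / max (V ω m) (α₀ m)) ∂P :=
        lintegral_const_mul' _ _ ENNReal.ofReal_ne_top
    _ ≤ ENNReal.ofReal (α m) * 1 := mul_le_mul_right (hE m) _
    _ = ENNReal.ofReal (α m) := mul_one _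


end MultilayerEFilter
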